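/- In every preference profile over a set of m ≥ 2 candidates with n ≥ 1 voters, there exists a pair of distinct candidates {x,y} whose swap-clone value satisfies β_{x,y} ≤ (m−2)/3. -/

import Mathlib

open Finset

lemma gauss_aux : ∀ m : ℕ, 2 * ∑ p ∈ range m, (m - p) = m * (m+1) := by
  intro m
  induction m with
  | zero => simp
  | succ m ih =>
    rw [Finset.sum_range_succ']
    have h : ∀ p : ℕ, m + 1 - (p + 1) = m - p := fun p => by omega
    simp only [h, Nat.sub_zero]
    rw [Nat.mul_add, ih]
    ring

lemma sumAbs : ∀ m : ℕ, 3 * ∑ p ∈ range m, ∑ q ∈ range m, (((p:ℤ) - q).natAbs) = m^3 - m := by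
  intro m
  induction m with
  | zero => simp
  | succ m ih =>
    have key : ∑ p ∈ range (m+1), ∑ q ∈ range (m+1), (((p:ℤ) - q).natAbs)
        = (∑ p ∈ range m, ∑ q ∈ range m, (((p:ℤ) - q).natAbs)) + 2 * ∑ p ∈ range m, (m - p) := by
      rw [Finset.sum_range_succ]
      have h1 : ∀ p : ℕ, ∑ q ∈ range (m+1), (((p:ℤ) - q).natAbs)
          = (∑ q ∈ range m, (((p:ℤ) - q).natAbs)) + ((p:ℤ) - m).natAbs := by
        intro p; rw [Finset.sum_range_succ]
      simp only [h1]
      rw [Finset.sum_add_distrib]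
      have h2 : ∀ p ∈ range m, ((p:ℤ) - m).natAbs = m - p := by
        intro p hp; rw [Finset.mem_range] at hp; omega
      have h3 : ∀ q ∈ range m, (((m:ℤ)) - q).natAbs = m - q := by
        intro q hq; rw [Finset.mem_range] at hq; omega
      rw [Finset.sum_congr rfl h2, Finset.sum_congr rfl h3]
      have : (((m:ℤ)) - m).natAbs = 0 := by omega
      rw [this]
      ring
    rw [key, Nat.mul_add, ih]
    have g := gauss_aux m
    have hm : m ≤ m ^ 3 := Nat.le_self_pow (by norm_num) m
    have hm1 : m + 1 ≤ (m+1) ^ 3 := Nat.le_self_pow (by norm_num) (m+1)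
    zify [hm, hm1] at g ⊢
    linarith

theorem exists_pair_swap_clone_le
    (C : Type*) [Fintype C] [DecidableEq C] (m n : ℕ)
    (hm : 2 ≤ m) (hC : Fintype.card C = m) (hn : 1 ≤ n)
    (P : Fin n → (C ≃ Fin m)) :
    ∃ x y : C, x ≠ y ∧
      (∑ i : Fin n, ((((P i x : ℤ) - (P i y : ℤ)).natAbs : ℝ) - 1)) / n
        ≤ ((m : ℝ) - 2) / 3 := by
  classical
  set s : Finset (C × C) := Finset.univ.offDiag with hs
  -- s is nonempty
  have hcard2 : 1 < Fintype.card C := by omega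
  obtain ⟨a, b, hab⟩ := Fintype.exists_pair_of_one_lt_card hcard2
  have hsne : s.Nonempty := ⟨(a, b), by simp [hs, Finset.mem_offDiag, hab]⟩
  have hscard : (s.card : ℝ) = (m : ℝ)^2 - m := by
    rw [hs, Finset.offDiag_card]
    simp only [Finset.card_univ, hC]
    have : m ≤ m * m := Nat.le_mul_of_pos_left m (by omega)
    push_cast [this]
    ring
  -- per-voter sum over all ordered pairs of natAbs
  have voter : ∀ i : Fin n, ∑ p ∈ s, ((((P i p.1 : ℤ) - (P i p.2 : ℤ)).natAbs : ℝ))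
      = ((m:ℝ)^3 - m) / 3 := by
    intro i
    have hdiag : ∑ p ∈ s, ((((P i p.1 : ℤ) - (P i p.2 : ℤ)).natAbs : ℝ))
        = ∑ p ∈ Finset.univ ×ˢ Finset.univ, ((((P i p.1 : ℤ) - (P i p.2 : ℤ)).natAbs : ℝ)) := by
      apply Finset.sum_subset
      · intro p hp
        simp [hs, Finset.mem_offDiag] at hp
        simp
      · intro p _ hp
        simp [hs, Finset.mem_offDiag] at hp
        simp [hp]
    rw [hdiag, Finset.sum_product]
    have e := P i
    have h1 : ∑ x : C, ∑ y : C, ((((P i x : ℤ) - (P i y : ℤ)).natAbs : ℝ))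
        = ∑ p : Fin m, ∑ q : Fin m, ((((p : ℤ) - (q : ℤ)).natAbs : ℝ)) := by
      rw [← Equiv.sum_comp (P i) (fun p => ∑ q : Fin m, ((((p : ℤ) - (q : ℤ)).natAbs : ℝ)))]
      apply Finset.sum_congr rfl
      intro x _
      rw [← Equiv.sum_comp (P i) (fun q => ((((P i x : ℤ) - (q : ℤ)).natAbs : ℝ)))]
    rw [h1]
    have h2 : ∑ p : Fin m, ∑ q : Fin m, ((((p : ℤ) - (q : ℤ)).natAbs : ℝ))
        = ∑ p ∈ range m, ∑ q ∈ range m, ((((p : ℤ) - (q : ℤ)).natAbs : ℝ)) := by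
      rw [Fin.sum_univ_eq_sum_range (fun p => ∑ q : Fin m, ((((p : ℤ) - (q : ℤ)).natAbs : ℝ)))]
      apply Finset.sum_congr rfl
      intro p _
      rw [Fin.sum_univ_eq_sum_range (fun q => ((((p : ℤ) - (q : ℤ)).natAbs : ℝ)))]
    rw [h2]
    have h3 := sumAbs m
    have hm3 : m ≤ m ^ 3 := Nat.le_self_pow (by norm_num) m
    have : ((3 * ∑ p ∈ range m, ∑ q ∈ range m, (((p:ℤ) - q).natAbs) : ℕ) : ℝ)
        = ((m^3 - m : ℕ) : ℝ) := congrArg (fun k : ℕ => (k:ℝ)) h3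
    push_cast [hm3] at this
    linarith
  -- total sum
  set F : C × C → ℝ := fun p => ∑ i : Fin n, ((((P i p.1 : ℤ) - (P i p.2 : ℤ)).natAbs : ℝ) - 1)
    with hF
  have htot : ∑ p ∈ s, F p ≤ ∑ p ∈ s, (((m : ℝ) - 2) / 3 * n) := by
    have lhs : ∑ p ∈ s, F p = (n : ℝ) * (((m:ℝ)^3 - m)/3 - ((m:ℝ)^2 - m)) := by
      rw [hF, Finset.sum_comm]
      have : ∀ i : Fin n, ∑ p ∈ s, ((((P i p.1 : ℤ) - (P i p.2 : ℤ)).natAbs : ℝ) - 1)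
          = ((m:ℝ)^3 - m)/3 - ((m:ℝ)^2 - m) := by
        intro i
        rw [Finset.sum_sub_distrib, voter i]
        simp [hscard]
      rw [Finset.sum_congr rfl (fun i _ => this i)]
      simp [mul_comm]
      ring
    rw [lhs, Finset.sum_const, nsmul_eq_mul, hscard]
    apply le_of_eq
    have hm2 : (2:ℝ) ≤ m := by exact_mod_cast hm
    ring
  obtain ⟨p, hp, hple⟩ := Finset.exists_le_of_sum_le hsne htot
  refine ⟨p.1, p.2, ?_, ?_⟩
  · rw [hs, Finset.mem_offDiag] at hp
    exact hp.2.2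
  · have hnpos : (0:ℝ) < n := by exact_mod_cast hn
    rw [div_le_iff₀ hnpos]
    have : F p ≤ ((m : ℝ) - 2) / 3 * n := hple
    simpa [hF] using this
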